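/- Let q₀ ∈ C¹[0,1] be not identically zero and let R_j → ∞ be real. Then the sequence of complex numbers N_j = ∫₀¹ (2i e^{(R_j/2)(1-x)} e^{-i√3 R_j/2} sin(√3 R_j x/2) − e^{-R_j(1-x)}(1 − e^{-i√3 R_j})) q₀(x) dx is unbounded whenever the integral ∫₀¹ e^{(R_j/2)(1-x)} sin(√3R_j x/2) q₀(x) dx grows like e^{R_j/2}/R_j, and in particular for q₀ with q₀(0) ≠ 0 there exists a choice of R_j along which |N_j| → ∞. -/

import Mathlib

open Filter Asymptotics
open scoped Real

/-- The sequence of complex numbers `N_j` from the ill-conditioning argument, as a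
function of the radius `R`. -/
noncomputable def NInt (q₀ : ℝ → ℂ) (R : ℝ) : ℂ :=
  ∫ x in (0:ℝ)..1,
    (2 * Complex.I * (Real.exp ((R / 2) * (1 - x)) : ℂ)
        * Complex.exp (-Complex.I * (Real.sqrt 3 * R / 2))
        * (Real.sin (Real.sqrt 3 * R * x / 2) : ℂ)
      - (Real.exp (-R * (1 - x)) : ℂ) * (1 - Complex.exp (-Complex.I * (Real.sqrt 3 * R)))) * q₀ x

section Aux

open intervalIntegral MeasureTheory

lemma exp_deriv' (a : ℝ) (x : ℝ) :
    HasDerivAt (fun x : ℝ => Real.exp (-(a*x))) (Real.exp (-(a*x)) * (-a)) x := by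
  have h : HasDerivAt (fun x : ℝ => -(a*x)) (-a) x := by
    exact (((hasDerivAt_id' x).const_mul a).neg).congr_deriv (by ring)
  exact h.exp

lemma antider1 (a b : ℝ) (hab : a^2 + b^2 ≠ 0) (x : ℝ) :
    HasDerivAt (fun x => -(Real.exp (-(a*x)) * (a * Real.sin (b*x) + b * Real.cos (b*x))) / (a^2+b^2))
      (Real.exp (-(a*x)) * Real.sin (b*x)) x := by
  have hb : HasDerivAt (fun x : ℝ => b*x) b x := by
    simpa using (hasDerivAt_id x).const_mul b
  have hs : HasDerivAt (fun x : ℝ => Real.sin (b*x)) (Real.cos (b*x) * b) x := hb.sin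
  have hc : HasDerivAt (fun x : ℝ => Real.cos (b*x)) (-Real.sin (b*x) * b) x := hb.cos
  have h := (((exp_deriv' a x).mul ((hs.const_mul a).add (hc.const_mul b))).neg).div_const (a^2+b^2)
  refine h.congr_deriv ?_
  simp only [Pi.add_apply]
  field_simp
  ring

lemma antider2 (a : ℝ) (ha : a ≠ 0) (x : ℝ) :
    HasDerivAt (fun x => -((x/a + 1/a^2) * Real.exp (-(a*x))))
      (x * Real.exp (-(a*x))) x := by
  have h1 : HasDerivAt (fun x : ℝ => x/a + 1/a^2) (1/a) x := by
    have : HasDerivAt (fun x : ℝ => x/a) (1/a) x := by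
      simpa [one_div] using (hasDerivAt_id x).div_const a
    exact this.add_const (1/a^2)
  have h := ((h1.mul (exp_deriv' a x)).neg)
  refine h.congr_deriv ?_
  field_simp
  ring

lemma intA (a b : ℝ) (hab : a^2+b^2 ≠ 0) :
    ∫ x in (0:ℝ)..1, Real.exp (-(a*x)) * Real.sin (b*x)
      = (b - Real.exp (-a) * (a * Real.sin b + b * Real.cos b)) / (a^2+b^2) := by
  rw [intervalIntegral.integral_eq_sub_of_hasDerivAt (fun x _ => antider1 a b hab x)
    (((Real.continuous_exp.comp (by continuity)).mul
      (Real.continuous_sin.comp (by continuity))).intervalIntegrable 0 1)]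
  norm_num
  ring

lemma intB (a : ℝ) (ha : a ≠ 0) :
    ∫ x in (0:ℝ)..1, x * Real.exp (-(a*x))
      = 1/a^2 - (1/a + 1/a^2) * Real.exp (-a) := by
  rw [intervalIntegral.integral_eq_sub_of_hasDerivAt (fun x _ => antider2 a ha x)
    ((continuous_id.mul (Real.continuous_exp.comp (by continuity))).intervalIntegrable 0 1)]
  norm_num
  ring

lemma sqrt3_le_two : Real.sqrt 3 ≤ 2 := by
  rw [show (2:ℝ) = Real.sqrt 4 by rw [show (4:ℝ) = 2^2 by norm_num, Real.sqrt_sq]; norm_num]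
  exact Real.sqrt_le_sqrt (by norm_num)

lemma intA_bound (R : ℝ) (hR : 0 < R) :
    |(∫ x in (0:ℝ)..1, Real.exp (-(R/2*x)) * Real.sin ((Real.sqrt 3*R/2)*x))
      - Real.sqrt 3/(2*R)| ≤ 2*Real.exp (-(R/2))/R := by
  have h2 : (R/2)^2 + (Real.sqrt 3*R/2)^2 = R^2 := by
    have : Real.sqrt 3 ^ 2 = 3 := Real.sq_sqrt (by norm_num)
    nlinarith
  rw [intA (R/2) (Real.sqrt 3*R/2) (by rw [h2]; positivity), h2]
  have hs3 : (0:ℝ) ≤ Real.sqrt 3 := Real.sqrt_nonneg 3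
  have e1 : (Real.sqrt 3*R/2 - Real.exp (-(R/2)) * (R/2 * Real.sin (Real.sqrt 3*R/2)
      + Real.sqrt 3*R/2 * Real.cos (Real.sqrt 3*R/2))) / R^2 - Real.sqrt 3/(2*R)
      = -(Real.exp (-(R/2)) * (R/2 * Real.sin (Real.sqrt 3*R/2)
      + Real.sqrt 3*R/2 * Real.cos (Real.sqrt 3*R/2))) / R^2 := by
    field_simp
    ring
  rw [e1, abs_div, abs_neg, abs_of_pos (by positivity : (0:ℝ) < R^2)]
  rw [div_le_div_iff₀ (by positivity) hR]
  have hsin := Real.abs_sin_le_one (Real.sqrt 3*R/2)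
  have hcos := Real.abs_cos_le_one (Real.sqrt 3*R/2)
  have he : 0 < Real.exp (-(R/2)) := Real.exp_pos _
  rw [abs_mul, abs_of_pos he]
  have hX : |R/2 * Real.sin (Real.sqrt 3*R/2) + Real.sqrt 3*R/2 * Real.cos (Real.sqrt 3*R/2)| ≤ 2*R := by
    have h1 := abs_add_le (R/2 * Real.sin (Real.sqrt 3*R/2)) (Real.sqrt 3*R/2 * Real.cos (Real.sqrt 3*R/2))
    rw [abs_mul, abs_mul, abs_of_pos (show (0:ℝ) < R/2 by positivity),
      abs_of_nonneg (show (0:ℝ) ≤ Real.sqrt 3*R/2 by positivity)] at h1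
    have hs3' := sqrt3_le_two
    nlinarith [mul_le_mul_of_nonneg_left hcos (show (0:ℝ) ≤ Real.sqrt 3*R/2 by positivity),
      mul_le_mul_of_nonneg_left hsin (show (0:ℝ) ≤ R/2 by positivity),
      mul_nonneg (sub_nonneg.2 hs3') hR.le]
  nlinarith [mul_le_mul_of_nonneg_right (mul_le_mul_of_nonneg_left hX he.le) hR.le]

lemma intB_bound (R : ℝ) (hR : 0 < R) :
    ∫ x in (0:ℝ)..1, x * Real.exp (-(R/2*x)) ≤ 4/R^2 := by
  rw [intB (R/2) (by positivity)]
  have he : 0 < Real.exp (-(R/2)) := Real.exp_pos _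
  have h1 : (0:ℝ) < 1/(R/2) + 1/(R/2)^2 := by positivity
  have : 1/(R/2)^2 = 4/R^2 := by field_simp; ring
  nlinarith

lemma intA_bound' (R : ℝ) (hR : 0 < R) :
    |(∫ x in (0:ℝ)..1, Real.exp (-(R/2*x)) * Real.sin (Real.sqrt 3*R*x/2))
      - Real.sqrt 3/(2*R)| ≤ 2*Real.exp (-(R/2))/R := by
  have h : (∫ x in (0:ℝ)..1, Real.exp (-(R/2*x)) * Real.sin (Real.sqrt 3*R*x/2))
      = ∫ x in (0:ℝ)..1, Real.exp (-(R/2*x)) * Real.sin ((Real.sqrt 3*R/2)*x) :=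
    intervalIntegral.integral_congr (fun x _ => by ring_nf)
  rw [h]; exact intA_bound R hR

/-- The main oscillatory integral. -/
noncomputable def Jq (q₀ : ℝ → ℂ) (R : ℝ) : ℂ :=
  ∫ x in (0:ℝ)..1, (Real.exp ((R / 2) * (1 - x)) : ℂ)
      * (Real.sin (Real.sqrt 3 * R * x / 2) : ℂ) * q₀ x

lemma coeff1 (R : ℝ) :
    ‖2 * Complex.I * Complex.exp (-Complex.I * (Real.sqrt 3 * R / 2))‖ = 2 := by
  simp [Complex.norm_exp]

lemma coeff2 (R : ℝ) :
    ‖(1:ℂ) - Complex.exp (-Complex.I * (Real.sqrt 3 * R))‖ ≤ 2 := by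
  refine le_trans (norm_sub_le _ _) ?_
  simp [Complex.norm_exp]
  norm_num

lemma grow (c M : ℝ) (hc : 0 < c) :
    Tendsto (fun r : ℝ => 2*(c*Real.exp (r/2)/r) - 2*M) atTop atTop := by
  apply tendsto_atTop_add_const_right
  have h0 : Tendsto (fun r : ℝ => r/2) atTop atTop :=
    tendsto_id.atTop_div_const (by norm_num)
  have h1 : Tendsto (fun r : ℝ => Real.exp (r/2)/(r/2)) atTop atTop := by
    have := (Real.tendsto_exp_div_pow_atTop 1).comp h0
    simpa [Function.comp_def] using this
  have h2 := h1.const_mul_atTop hc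
  refine h2.congr (fun r => ?_)
  rw [div_div_eq_mul_div]
  ring

lemma lip_bound (q₀ : ℝ → ℂ) (hq : ContDiffOn ℝ 1 q₀ (Set.Icc (0:ℝ) 1)) :
    ∃ K ≥ (0:ℝ), ∀ x ∈ Set.Icc (0:ℝ) 1, ‖q₀ x - q₀ 0‖ ≤ K * x := by
  have hu : UniqueDiffOn ℝ (Set.Icc (0:ℝ) 1) := uniqueDiffOn_Icc one_pos
  have hd := hq.differentiableOn one_ne_zero
  have hc := hq.continuousOn_fderivWithin hu le_rfl
  obtain ⟨C, hC⟩ := isCompact_Icc.exists_bound_of_continuousOn hc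
  refine ⟨max C 0, le_max_right _ _, fun x hx => ?_⟩
  have h := (convex_Icc (0:ℝ) 1).norm_image_sub_le_of_norm_fderivWithin_le (C := max C 0) hd
    (fun y hy => le_trans (hC y hy) (le_max_left _ _)) (Set.left_mem_Icc.2 zero_le_one) hx
  simpa [abs_of_nonneg hx.1] using h

section WithCont

variable (q₀ : ℝ → ℂ) (hcont : ContinuousOn q₀ (Set.Icc (0:ℝ) 1))
include hcont

lemma hcont' : ContinuousOn q₀ (Set.uIcc (0:ℝ) 1) := by
  rwa [Set.uIcc_of_le zero_le_one]

lemma NInt_decomp (R : ℝ) :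
    NInt q₀ R = (2 * Complex.I * Complex.exp (-Complex.I * (Real.sqrt 3 * R / 2))) * Jq q₀ R
      - (1 - Complex.exp (-Complex.I * (Real.sqrt 3 * R)))
        * ∫ x in (0:ℝ)..1, (Real.exp (-R * (1 - x)) : ℂ) * q₀ x := by
  have hq' := hcont' q₀ hcont
  have hf : IntervalIntegrable (fun x => (Real.exp ((R / 2) * (1 - x)) : ℂ)
      * (Real.sin (Real.sqrt 3 * R * x / 2) : ℂ) * q₀ x) volume 0 1 :=
    (((Continuous.continuousOn (by continuity)).mul hq')).intervalIntegrable
  have hg : IntervalIntegrable (fun x => (Real.exp (-R * (1 - x)) : ℂ) * q₀ x) volume 0 1 :=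
    (((Continuous.continuousOn (by continuity)).mul hq')).intervalIntegrable
  rw [NInt, show (∫ x in (0:ℝ)..1,
      (2 * Complex.I * (Real.exp ((R / 2) * (1 - x)) : ℂ)
        * Complex.exp (-Complex.I * (Real.sqrt 3 * R / 2))
        * (Real.sin (Real.sqrt 3 * R * x / 2) : ℂ)
      - (Real.exp (-R * (1 - x)) : ℂ) * (1 - Complex.exp (-Complex.I * (Real.sqrt 3 * R)))) * q₀ x)
    = ∫ x in (0:ℝ)..1,
      ((2 * Complex.I * Complex.exp (-Complex.I * (Real.sqrt 3 * R / 2)))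
          * ((Real.exp ((R / 2) * (1 - x)) : ℂ) * (Real.sin (Real.sqrt 3 * R * x / 2) : ℂ) * q₀ x)
        - (1 - Complex.exp (-Complex.I * (Real.sqrt 3 * R)))
          * ((Real.exp (-R * (1 - x)) : ℂ) * q₀ x))
    from intervalIntegral.integral_congr (fun x _ => by ring)]
  rw [intervalIntegral.integral_sub (hf.const_mul _) (hg.const_mul _),
    intervalIntegral.integral_const_mul, intervalIntegral.integral_const_mul, Jq]

omit hcont in
lemma Kint_bound (M : ℝ) (hM : ∀ x ∈ Set.Icc (0:ℝ) 1, ‖q₀ x‖ ≤ M) (R : ℝ) (hR : 0 ≤ R) :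
    ‖∫ x in (0:ℝ)..1, (Real.exp (-R * (1 - x)) : ℂ) * q₀ x‖ ≤ M := by
  have hM0 : 0 ≤ M := le_trans (norm_nonneg _) (hM 0 (by norm_num))
  have h := intervalIntegral.norm_integral_le_of_norm_le_const (C := M) (a := (0:ℝ)) (b := 1)
    (f := fun x => (Real.exp (-R * (1 - x)) : ℂ) * q₀ x) ?_
  · simpa using h
  · intro x hx
    rw [Set.uIoc_of_le zero_le_one] at hx
    have hx' : x ∈ Set.Icc (0:ℝ) 1 := ⟨hx.1.le, hx.2⟩
    rw [norm_mul, Complex.norm_real, Real.norm_eq_abs, abs_of_pos (Real.exp_pos _)]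
    have h1 : Real.exp (-R * (1 - x)) ≤ 1 := by
      rw [Real.exp_le_one_iff]
      nlinarith [hx.2]
    nlinarith [hM x hx', norm_nonneg (q₀ x), Real.exp_pos (-R * (1 - x))]

lemma Jq_eq (R : ℝ) : Jq q₀ R = (Real.exp (R/2) : ℂ) *
    ((q₀ 0) * ((∫ x in (0:ℝ)..1, Real.exp (-(R/2*x)) * Real.sin (Real.sqrt 3*R*x/2) : ℝ) : ℂ)
      + ∫ x in (0:ℝ)..1, (Real.exp (-(R/2*x)) : ℂ)
          * (Real.sin (Real.sqrt 3*R*x/2) : ℂ) * (q₀ x - q₀ 0)) := by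
  have hq' := hcont' q₀ hcont
  have h1 : IntervalIntegrable (fun x => ((Real.exp (-(R/2*x)) * Real.sin (Real.sqrt 3*R*x/2) : ℝ) : ℂ))
      volume 0 1 := (Continuous.continuousOn (by continuity)).intervalIntegrable
  have h2 : IntervalIntegrable (fun x => (Real.exp (-(R/2*x)) : ℂ)
      * (Real.sin (Real.sqrt 3*R*x/2) : ℂ) * (q₀ x - q₀ 0)) volume 0 1 :=
    ((Continuous.continuousOn (by continuity)).mul (hq'.sub continuousOn_const)).intervalIntegrable
  rw [Jq, show (∫ x in (0:ℝ)..1, (Real.exp ((R / 2) * (1 - x)) : ℂ)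
      * (Real.sin (Real.sqrt 3 * R * x / 2) : ℂ) * q₀ x)
    = ∫ x in (0:ℝ)..1, (Real.exp (R/2) : ℂ) *
        ((q₀ 0) * ((Real.exp (-(R/2*x)) * Real.sin (Real.sqrt 3*R*x/2) : ℝ) : ℂ)
          + (Real.exp (-(R/2*x)) : ℂ) * (Real.sin (Real.sqrt 3*R*x/2) : ℂ) * (q₀ x - q₀ 0))
    from intervalIntegral.integral_congr (fun x _ => by
      rw [show (R/2) * (1-x) = R/2 + -(R/2*x) by ring, Real.exp_add]
      push_cast
      ring)]
  rw [intervalIntegral.integral_const_mul, intervalIntegral.integral_add (h1.const_mul _) h2,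
    intervalIntegral.integral_const_mul, intervalIntegral.integral_ofReal]

lemma Jq_lower (K : ℝ) (hK0 : 0 ≤ K)
    (hlip : ∀ x ∈ Set.Icc (0:ℝ) 1, ‖q₀ x - q₀ 0‖ ≤ K * x) (R : ℝ) (hR : 0 < R) :
    Real.exp (R/2) * (‖q₀ 0‖ * (Real.sqrt 3/(2*R)) - ‖q₀ 0‖ * (2*Real.exp (-(R/2))/R)
      - K*(4/R^2)) ≤ ‖Jq q₀ R‖ := by
  have hq' := hcont' q₀ hcont
  rw [Jq_eq q₀ hcont R, norm_mul, Complex.norm_real, Real.norm_eq_abs,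
    abs_of_pos (Real.exp_pos _)]
  refine mul_le_mul_of_nonneg_left ?_ (Real.exp_pos _).le
  set A := ∫ x in (0:ℝ)..1, Real.exp (-(R/2*x)) * Real.sin (Real.sqrt 3*R*x/2) with hA
  set B := ∫ x in (0:ℝ)..1, (Real.exp (-(R/2*x)) : ℂ)
      * (Real.sin (Real.sqrt 3*R*x/2) : ℂ) * (q₀ x - q₀ 0) with hBdef
  have habs := intA_bound' R hR
  have hAge : Real.sqrt 3/(2*R) - 2*Real.exp (-(R/2))/R ≤ |A| := by
    have := abs_sub_abs_le_abs_sub (Real.sqrt 3/(2*R)) A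
    have h3 : |Real.sqrt 3/(2*R)| = Real.sqrt 3/(2*R) := abs_of_nonneg (by positivity)
    rw [abs_sub_comm] at habs
    linarith [this, h3.symm ▸ this]
  have hB : ‖B‖ ≤ K * (4/R^2) := by
    have hg : IntervalIntegrable (fun x => K * (x * Real.exp (-(R/2*x)))) volume 0 1 :=
      (Continuous.continuousOn (by continuity)).intervalIntegrable
    have hbound : ∀ᵐ t ∂(volume.restrict (Set.uIoc (0:ℝ) 1)),
        ‖(Real.exp (-(R/2*t)) : ℂ) * (Real.sin (Real.sqrt 3*R*t/2) : ℂ) * (q₀ t - q₀ 0)‖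
          ≤ K * (t * Real.exp (-(R/2*t))) := by
      refine ae_restrict_of_forall_mem measurableSet_uIoc (fun t ht => ?_)
      rw [Set.uIoc_of_le zero_le_one] at ht
      have ht' : t ∈ Set.Icc (0:ℝ) 1 := ⟨ht.1.le, ht.2⟩
      rw [norm_mul, norm_mul, Complex.norm_real, Complex.norm_real, Real.norm_eq_abs,
        Real.norm_eq_abs, abs_of_pos (Real.exp_pos _)]
      have hs := Real.abs_sin_le_one (Real.sqrt 3*R*t/2)
      have hl := hlip t ht'
      nlinarith [Real.exp_pos (-(R/2*t)), norm_nonneg (q₀ t - q₀ 0),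
        abs_nonneg (Real.sin (Real.sqrt 3*R*t/2)), ht.1,
        mul_le_mul_of_nonneg_left hl (Real.exp_pos (-(R/2*t))).le,
        mul_nonneg (mul_nonneg (Real.exp_pos (-(R/2*t))).le (norm_nonneg (q₀ t - q₀ 0)))
          (sub_nonneg.2 hs)]
    have h := intervalIntegral.norm_integral_le_abs_of_norm_le hbound hg
    rw [intervalIntegral.integral_const_mul] at h
    have hnn : 0 ≤ ∫ x in (0:ℝ)..1, x * Real.exp (-(R/2*x)) :=
      intervalIntegral.integral_nonneg zero_le_one
        (fun x hx => mul_nonneg hx.1 (Real.exp_pos _).le)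
    have hub := intB_bound R hR
    calc ‖B‖ ≤ |K * ∫ x in (0:ℝ)..1, x * Real.exp (-(R/2*x))| := h
      _ = K * ∫ x in (0:ℝ)..1, x * Real.exp (-(R/2*x)) := abs_of_nonneg (mul_nonneg hK0 hnn)
      _ ≤ K * (4/R^2) := by nlinarith
  have hmain : ‖q₀ 0 * (A:ℂ)‖ - ‖B‖ ≤ ‖q₀ 0 * (A:ℂ) + B‖ := by
    have := norm_sub_norm_le (q₀ 0 * (A:ℂ)) (-B)
    simpa [sub_neg_eq_add] using this
  rw [norm_mul, Complex.norm_real, Real.norm_eq_abs] at hmain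
  have h5 : ‖q₀ 0‖ * (Real.sqrt 3/(2*R) - 2*Real.exp (-(R/2))/R) ≤ ‖q₀ 0‖ * |A| :=
    mul_le_mul_of_nonneg_left hAge (norm_nonneg _)
  nlinarith [norm_nonneg (q₀ 0)]

lemma NInt_ge (M : ℝ) (hM : ∀ x ∈ Set.Icc (0:ℝ) 1, ‖q₀ x‖ ≤ M) (R : ℝ) (hR : 0 ≤ R) :
    2*‖Jq q₀ R‖ - 2*M ≤ ‖NInt q₀ R‖ := by
  rw [NInt_decomp q₀ hcont R]
  have h1 := norm_sub_norm_le
    ((2 * Complex.I * Complex.exp (-Complex.I * (Real.sqrt 3 * R / 2))) * Jq q₀ R)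
    ((1 - Complex.exp (-Complex.I * (Real.sqrt 3 * R)))
      * ∫ x in (0:ℝ)..1, (Real.exp (-R * (1 - x)) : ℂ) * q₀ x)
  rw [norm_mul, coeff1, norm_mul] at h1
  have h2 := Kint_bound q₀ M hM R hR
  have h3 := coeff2 R
  have h4 : ‖(1:ℂ) - Complex.exp (-Complex.I * (Real.sqrt 3 * R))‖
      * ‖∫ x in (0:ℝ)..1, (Real.exp (-R * (1 - x)) : ℂ) * q₀ x‖ ≤ 2*M :=
    mul_le_mul h3 h2 (norm_nonneg _) (by norm_num)
  linarith

lemma key (R : ℕ → ℝ) (hR : Tendsto R atTop atTop) (c : ℝ) (hc : 0 < c)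
    (hev : ∀ᶠ j in atTop, c * Real.exp (R j / 2) / R j ≤ ‖Jq q₀ (R j)‖) :
    Tendsto (fun j => ‖NInt q₀ (R j)‖) atTop atTop := by
  obtain ⟨M, hM⟩ := isCompact_Icc.exists_bound_of_continuousOn hcont
  refine tendsto_atTop_mono' atTop ?_ ((grow c M hc).comp hR)
  filter_upwards [hev, hR.eventually_ge_atTop 0] with j h1 h2
  have h3 := NInt_ge q₀ hcont M hM (R j) h2
  simp only [Function.comp]
  linarith

end WithCont

end Aux

theorem stmt14 (q₀ : ℝ → ℂ) (hq : ContDiffOn ℝ 1 q₀ (Set.Icc (0:ℝ) 1))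
    (hne : ∃ x ∈ Set.Icc (0:ℝ) 1, q₀ x ≠ 0)
    (R : ℕ → ℝ) (hR : Tendsto R atTop atTop) :
    ((∃ c > (0:ℝ), ∀ᶠ j in atTop,
        c * Real.exp (R j / 2) / R j ≤
          ‖∫ x in (0:ℝ)..1, (Real.exp ((R j / 2) * (1 - x)) : ℂ)
              * (Real.sin (Real.sqrt 3 * R j * x / 2) : ℂ) * q₀ x‖) →
      ¬ ∃ C : ℝ, ∀ j, ‖NInt q₀ (R j)‖ ≤ C) ∧
    (q₀ 0 ≠ 0 → ∃ R' : ℕ → ℝ, Tendsto R' atTop atTop ∧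
      Tendsto (fun j => ‖NInt q₀ (R' j)‖) atTop atTop) := by
  have hcont : ContinuousOn q₀ (Set.Icc (0:ℝ) 1) := hq.continuousOn
  constructor
  · rintro ⟨c, hc, hev⟩ ⟨C, hC⟩
    have hkey := key q₀ hcont R hR c hc hev
    obtain ⟨j, hj⟩ := (hkey.eventually_gt_atTop C).exists
    exact absurd (hC j) (not_le.2 hj)
  · intro h0
    refine ⟨R, hR, ?_⟩
    have ha0 : 0 < ‖q₀ 0‖ := norm_pos_iff.2 h0
    have hs3 : 0 < Real.sqrt 3 := Real.sqrt_pos.2 (by norm_num)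
    obtain ⟨K, hK0, hlip⟩ := lip_bound q₀ hq
    apply key q₀ hcont R hR (Real.sqrt 3 * ‖q₀ 0‖ / 4) (by positivity)
    have hphi : Tendsto (fun r : ℝ => 2*‖q₀ 0‖*Real.exp (-(r/2)) + 4*K/r) atTop (nhds 0) := by
      have t1 : Tendsto (fun r : ℝ => Real.exp (-(r/2))) atTop (nhds 0) := by
        have := Real.tendsto_exp_neg_atTop_nhds_zero.comp
          (tendsto_id.atTop_div_const (show (0:ℝ) < 2 by norm_num))
        simpa [Function.comp_def] using this
      have t2 : Tendsto (fun r : ℝ => 4*K/r) atTop (nhds 0) := by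
        simpa [div_eq_mul_inv] using tendsto_inv_atTop_zero.const_mul (4*K)
      have := (t1.const_mul (2*‖q₀ 0‖)).add t2
      simpa using this
    have hlt : ∀ᶠ r in atTop, 2*‖q₀ 0‖*Real.exp (-(r/2)) + 4*K/r < Real.sqrt 3 * ‖q₀ 0‖ / 4 :=
      hphi.eventually_lt_const (by positivity)
    filter_upwards [hR.eventually hlt, hR.eventually_gt_atTop 0] with j h1 h2
    have hJ := Jq_lower q₀ hcont K hK0 hlip (R j) h2
    refine le_trans ?_ hJ
    set r := R j with hr
    have hr2 : (0:ℝ) < r^2 := by positivity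
    have e1 : ‖q₀ 0‖*(Real.sqrt 3/(2*r)) - ‖q₀ 0‖*(2*Real.exp (-(r/2))/r) - K*(4/r^2)
        = (‖q₀ 0‖*Real.sqrt 3*r/2 - 2*‖q₀ 0‖*Real.exp (-(r/2))*r - 4*K)/r^2 := by
      field_simp
    have e2 : Real.sqrt 3 * ‖q₀ 0‖ / 4 * Real.exp (r/2) / r
        = Real.exp (r/2) * ((Real.sqrt 3*‖q₀ 0‖/4*r)/r^2) := by
      field_simp
    rw [e1, e2]
    refine mul_le_mul_of_nonneg_left ?_ (Real.exp_pos _).le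
    rw [div_le_div_iff_of_pos_right hr2]
    have h1' : 2*‖q₀ 0‖*Real.exp (-(r/2))*r + 4*K < Real.sqrt 3 * ‖q₀ 0‖ / 4 * r := by
      have hh := mul_lt_mul_of_pos_right h1 h2
      rw [add_mul, div_mul_cancel₀ _ h2.ne'] at hh
      exact hh
    nlinarith
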